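/- The configuration B = {(1,0,0), (0,1,0), (1,1,1), (1,1,2), (1,2,3), (1,2,4)} ⊆ ℤ³ is not supernormal; specifically, the point (1,2,2) lies in cone((0,1,0),(1,1,1),(1,2,3)) ∩ ℤ³ but is not a nonnegative integer combination of (0,1,0), (1,1,1), (1,2,3), and no other element of B lies in that cone. -/

import Mathlib

/-- `x ∈ ℝ^m` lies in the cone (nonnegative real span) of `B ⊆ ℤ^m`. -/
def ConeM {m : ℕ} (B : Set (Fin m → ℤ)) (x : Fin m → ℝ) : Prop :=
  ∃ (s : Finset (Fin m → ℤ)) (c : (Fin m → ℤ) → ℝ),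
    ↑s ⊆ B ∧ (∀ b, 0 ≤ c b) ∧ ∀ i, x i = ∑ b ∈ s, c b * (b i : ℝ)

/-- `z ∈ ℤ^m` is a nonnegative integer combination of elements of `B ⊆ ℤ^m`. -/
def NNCombM {m : ℕ} (B : Set (Fin m → ℤ)) (z : Fin m → ℤ) : Prop :=
  ∃ (s : Finset (Fin m → ℤ)) (c : (Fin m → ℤ) → ℕ),
    ↑s ⊆ B ∧ ∀ i, z i = ∑ b ∈ s, (c b : ℤ) * b i

/-- `B ⊆ ℤ^m` is supernormal if for every subset `B' ⊆ B` every lattice point of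
`cone(B')` is a nonnegative integer combination of `B ∩ cone(B')`. -/
def SupernormalM {m : ℕ} (B : Set (Fin m → ℤ)) : Prop :=
  ∀ B' ⊆ B, ∀ z : Fin m → ℤ, ConeM B' (fun i => (z i : ℝ)) →
    NNCombM {b ∈ B | ConeM B' (fun i => (b i : ℝ))} z

/-- `B ⊆ ℤ^m` is normal if every lattice point of `cone(B)` is a nonnegative
integer combination of `B`. -/
def NormalM {m : ℕ} (B : Set (Fin m → ℤ)) : Prop :=
  ∀ z : Fin m → ℤ, ConeM B (fun i => (z i : ℝ)) → NNCombM B z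

private lemma sum_three {R : Type*} [AddCommMonoid R] (s : Finset (Fin 3 → ℤ))
    (hs : (↑s : Set (Fin 3 → ℤ)) ⊆ {![0,1,0], ![1,1,1], ![1,2,3]}) (f : (Fin 3 → ℤ) → R) :
    ∑ b ∈ s, f b =
      (if ![0,1,0] ∈ s then f ![0,1,0] else 0) +
      (if ![1,1,1] ∈ s then f ![1,1,1] else 0) +
      (if ![1,2,3] ∈ s then f ![1,2,3] else 0) := by
  classical
  have hsub : s ⊆ ({![0,1,0], ![1,1,1], ![1,2,3]} : Finset (Fin 3 → ℤ)) := by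
    intro x hx
    have := hs hx
    simp only [Set.mem_insert_iff, Set.mem_singleton_iff] at this
    simp [Finset.mem_insert, this]
  have h1 : ∑ b ∈ s, f b
      = ∑ b ∈ ({![0,1,0], ![1,1,1], ![1,2,3]} : Finset (Fin 3 → ℤ)),
          (if b ∈ s then f b else 0) := by
    rw [Finset.sum_ite_mem]
    congr 1
    exact (Finset.inter_eq_right.mpr hsub).symm
  rw [h1, Finset.sum_insert (by decide), Finset.sum_insert (by decide),
    Finset.sum_singleton, add_assoc]

private lemma cone_extract (x : Fin 3 → ℝ)
    (h : ConeM ({![0,1,0], ![1,1,1], ![1,2,3]} : Set (Fin 3 → ℤ)) x) :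
    ∃ a b c : ℝ, 0 ≤ a ∧ 0 ≤ b ∧ 0 ≤ c ∧
      x 0 = b + c ∧ x 1 = a + b + 2*c ∧ x 2 = b + 3*c := by
  obtain ⟨s, co, hs, hc, hx⟩ := h
  classical
  refine ⟨if ![0,1,0] ∈ s then co ![0,1,0] else 0,
          if ![1,1,1] ∈ s then co ![1,1,1] else 0,
          if ![1,2,3] ∈ s then co ![1,2,3] else 0,
          ?_, ?_, ?_, ?_, ?_, ?_⟩
  · split_ifs <;> simp [hc]
  · split_ifs <;> simp [hc]
  · split_ifs <;> simp [hc]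
  all_goals {
    have h0 := hx 0; have h1 := hx 1; have h2 := hx 2
    rw [sum_three s hs] at h0 h1 h2
    simp only [Matrix.cons_val_zero, Matrix.cons_val_one, Matrix.cons_val_two, Matrix.tail_cons, Matrix.head_cons] at h0 h1 h2 ⊢
    norm_num at h0 h1 h2 ⊢
    split_ifs at h0 h1 h2 ⊢ <;> linarith }

private lemma comb_extract (z : Fin 3 → ℤ)
    (h : NNCombM ({![0,1,0], ![1,1,1], ![1,2,3]} : Set (Fin 3 → ℤ)) z) :
    ∃ a b c : ℕ, z 0 = b + c ∧ z 1 = a + b + 2*c ∧ z 2 = b + 3*c := by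
  obtain ⟨s, co, hs, hz⟩ := h
  classical
  refine ⟨if ![0,1,0] ∈ s then co ![0,1,0] else 0,
          if ![1,1,1] ∈ s then co ![1,1,1] else 0,
          if ![1,2,3] ∈ s then co ![1,2,3] else 0, ?_, ?_, ?_⟩
  all_goals {
    have h0 := hz 0; have h1 := hz 1; have h2 := hz 2
    rw [sum_three s hs] at h0 h1 h2
    simp only [Matrix.cons_val_zero, Matrix.cons_val_one, Matrix.cons_val_two, Matrix.tail_cons, Matrix.head_cons] at h0 h1 h2 ⊢
    norm_num at h0 h1 h2 ⊢
    split_ifs at h0 h1 h2 ⊢ <;> push_cast <;> omega }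

/-- The configuration `B = {(1,0,0),(0,1,0),(1,1,1),(1,1,2),(1,2,3),(1,2,4)}` is not
supernormal: `(1,2,2)` lies in `cone((0,1,0),(1,1,1),(1,2,3)) ∩ ℤ³`, is not a
nonnegative integer combination of these three vectors, and no other element of `B`
lies in that cone. -/
theorem stmt8 :
    ConeM ({![0,1,0], ![1,1,1], ![1,2,3]} : Set (Fin 3 → ℤ)) (fun i => ((![1,2,2] : Fin 3 → ℤ) i : ℝ)) ∧
    ¬ NNCombM ({![0,1,0], ![1,1,1], ![1,2,3]} : Set (Fin 3 → ℤ)) ![1,2,2] ∧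
    (∀ v ∈ ({![1,0,0], ![0,1,0], ![1,1,1], ![1,1,2], ![1,2,3], ![1,2,4]} : Set (Fin 3 → ℤ)),
      ConeM ({![0,1,0], ![1,1,1], ![1,2,3]} : Set (Fin 3 → ℤ)) (fun i => (v i : ℝ)) →
        v ∈ ({![0,1,0], ![1,1,1], ![1,2,3]} : Set (Fin 3 → ℤ))) ∧
    ¬ SupernormalM ({![1,0,0], ![0,1,0], ![1,1,1], ![1,1,2], ![1,2,3], ![1,2,4]} : Set (Fin 3 → ℤ)) := by
  have hcone : ConeM ({![0,1,0], ![1,1,1], ![1,2,3]} : Set (Fin 3 → ℤ))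
      (fun i => ((![1,2,2] : Fin 3 → ℤ) i : ℝ)) := by
    refine ⟨({![0,1,0], ![1,1,1], ![1,2,3]} : Finset (Fin 3 → ℤ)), fun _ => 1/2, ?_, fun _ => by norm_num, ?_⟩
    · intro x hx
      simp only [Finset.coe_insert, Finset.coe_singleton] at hx
      exact hx
    · intro i
      rw [Finset.sum_insert (by decide), Finset.sum_insert (by decide), Finset.sum_singleton]
      fin_cases i <;> norm_num
  have hnot : ¬ NNCombM ({![0,1,0], ![1,1,1], ![1,2,3]} : Set (Fin 3 → ℤ)) ![1,2,2] := by
    intro h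
    obtain ⟨a, b, c, h0, h1, h2⟩ := comb_extract _ h
    norm_num [Matrix.cons_val_two, Matrix.tail_cons] at h0 h1 h2
    omega
  have honly : ∀ v ∈ ({![1,0,0], ![0,1,0], ![1,1,1], ![1,1,2], ![1,2,3], ![1,2,4]} : Set (Fin 3 → ℤ)),
      ConeM ({![0,1,0], ![1,1,1], ![1,2,3]} : Set (Fin 3 → ℤ)) (fun i => (v i : ℝ)) →
        v ∈ ({![0,1,0], ![1,1,1], ![1,2,3]} : Set (Fin 3 → ℤ)) := by
    intro v hv hcv
    obtain ⟨a, b, c, ha, hb, hc, h0, h1, h2⟩ := cone_extract _ hcv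
    simp only [Set.mem_insert_iff, Set.mem_singleton_iff] at hv ⊢
    rcases hv with rfl | rfl | rfl | rfl | rfl | rfl
    · exfalso; norm_num [Matrix.cons_val_two, Matrix.tail_cons] at h0 h1 h2; linarith
    · left; rfl
    · right; left; rfl
    · exfalso; norm_num [Matrix.cons_val_two, Matrix.tail_cons] at h0 h1 h2; linarith
    · right; right; rfl
    · exfalso; norm_num [Matrix.cons_val_two, Matrix.tail_cons] at h0 h1 h2; linarith
  refine ⟨hcone, hnot, honly, ?_⟩
  intro hsn
  have hsub : ({![0,1,0], ![1,1,1], ![1,2,3]} : Set (Fin 3 → ℤ)) ⊆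
      ({![1,0,0], ![0,1,0], ![1,1,1], ![1,1,2], ![1,2,3], ![1,2,4]} : Set (Fin 3 → ℤ)) := by
    intro x hx
    simp only [Set.mem_insert_iff, Set.mem_singleton_iff] at hx ⊢
    tauto
  have := hsn _ hsub ![1,2,2] hcone
  apply hnot
  obtain ⟨s, co, hs, hz⟩ := this
  refine ⟨s, co, ?_, hz⟩
  intro x hx
  obtain ⟨hxB, hxc⟩ := hs hx
  exact honly x hxB hxc
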